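/- The identity element of a unital Banach algebra is not a commutator: there do not exist elements A, B with AB − BA = 1. -/
import Mathlib

/-- Wintner's theorem: the identity of a unital Banach algebra is not a commutator. -/
theorem one_not_commutator {A : Type*} [NormedRing A] [NormedAlgebra ℂ A]
    [CompleteSpace A] [NormOneClass A] :
    ¬ ∃ x y : A, x * y - y * x = 1 := by
  rintro ⟨x, y, h⟩
  -- key identity: x * y^(n+1) - y^(n+1) * x = (n+1) • y^n
  have key : ∀ n : ℕ, x * y ^ (n + 1) - y ^ (n + 1) * x = (n + 1 : ℂ) • y ^ n := by
    intro n
    induction n with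
    | zero => simpa using h
    | succ n ih =>
      have : x * y ^ (n + 2) - y ^ (n + 2) * x
          = (x * y ^ (n + 1) - y ^ (n + 1) * x) * y + y ^ (n + 1) * (x * y - y * x) := by
        noncomm_ring
      rw [this, ih, h, smul_mul_assoc, ← pow_succ, mul_one]
      push_cast
      module
  have hy : ∀ n : ℕ, y ^ n ≠ 0 := by
    intro n
    induction n with
    | zero =>
      simp only [pow_zero]
      intro h0
      have h1 := norm_one (α := A)
      rw [h0, norm_zero] at h1
      norm_num at h1
    | succ n ih =>
      intro h0
      apply ih
      have := key n
      rw [h0, mul_zero, zero_mul, sub_zero] at this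
      have hc : ((n : ℂ) + 1) ≠ 0 := Nat.cast_add_one_ne_zero n
      exact (smul_eq_zero.mp this.symm).resolve_left hc
  -- norm estimate
  have bound : ∀ n : ℕ, (n + 1 : ℝ) ≤ 2 * ‖x‖ * ‖y‖ := by
    intro n
    have hk := key n
    have h1 : ‖((n : ℂ) + 1) • y ^ n‖ = (n + 1 : ℝ) * ‖y ^ n‖ := by
      rw [norm_smul]
      congr 1
      simpa using Complex.norm_natCast (n + 1)
    have h2 : ‖x * y ^ (n + 1) - y ^ (n + 1) * x‖ ≤ 2 * ‖x‖ * ‖y‖ * ‖y ^ n‖ := by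
      calc ‖x * y ^ (n + 1) - y ^ (n + 1) * x‖
          ≤ ‖x * y ^ (n + 1)‖ + ‖y ^ (n + 1) * x‖ := norm_sub_le _ _
        _ ≤ ‖x‖ * ‖y ^ (n + 1)‖ + ‖y ^ (n + 1)‖ * ‖x‖ := by
            gcongr <;> exact norm_mul_le _ _
        _ ≤ ‖x‖ * (‖y ^ n‖ * ‖y‖) + ‖y ^ n‖ * ‖y‖ * ‖x‖ := by
            have : ‖y ^ (n + 1)‖ ≤ ‖y ^ n‖ * ‖y‖ := by
              rw [pow_succ]; exact norm_mul_le _ _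
            gcongr
        _ = 2 * ‖x‖ * ‖y‖ * ‖y ^ n‖ := by ring
    have h3 : (n + 1 : ℝ) * ‖y ^ n‖ ≤ 2 * ‖x‖ * ‖y‖ * ‖y ^ n‖ := by
      rw [← h1, ← hk]; exact h2
    have hyn : 0 < ‖y ^ n‖ := norm_pos_iff.mpr (hy n)
    exact le_of_mul_le_mul_right h3 hyn
  obtain ⟨n, hn⟩ := exists_nat_gt (2 * ‖x‖ * ‖y‖)
  have := bound n
  linarith
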